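/- Let n ≥ 2, 0 < r < n(n−1), and suppose a symmetric matrix (h_{ij}^α)_{i,j=1}^n (for each α in a finite index set) satisfies the equality 2τ = r𝒞 + ((n−1)(n+r)(n²−n−r)/(rn))·𝒞(L₀) + C₀ in the inequality derived from 𝒫 ≥ 0, where L₀ realizes the infimum of 𝒞(L). Then h_{ij}^α = 0 for all i ≠ j and h_{nn}^α = (n(n−1)/r)·h_{11}^α = ... = (n(n−1)/r)·h_{n−1,n−1}^α for all α; i.e. equality holds iff the submanifold is invariantly quasi-umbilical with trivial normal connection and shape operators A_{n+1} = diag(a,...,a, n(n−1)a/r), A_{n+2} = ... = A_{4m} = 0. -/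

import Mathlib

open Finset

lemma sum_sq_split (f : ℕ → ℕ → ℝ) (k : ℕ) :
    ∑ i ∈ range k, ∑ j ∈ range k, (f i j)^2
      = (∑ i ∈ range k, (f i i)^2) + ∑ i ∈ range k, ∑ j ∈ (range k).erase i, (f i j)^2 := by
  rw [← Finset.sum_add_distrib]
  exact Finset.sum_congr rfl fun i hi => (Finset.add_sum_erase _ _ hi).symm

lemma var_ident (k : ℕ) (x : ℕ → ℝ) :
    ∑ i ∈ range k, ∑ j ∈ range k, (x i - x j)^2
      = 2*k*(∑ i ∈ range k, (x i)^2) - 2*(∑ i ∈ range k, x i)^2 := by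
  have key : ∀ i ∈ range k, ∑ j ∈ range k, (x i - x j)^2
      = (k:ℝ)*(x i)^2 - 2*x i*(∑ j ∈ range k, x j) + ∑ j ∈ range k, (x j)^2 := by
    intro i _
    simp only [sub_sq, Finset.sum_add_distrib, Finset.sum_sub_distrib, Finset.sum_const,
      Finset.card_range, nsmul_eq_mul]
    rw [mul_assoc, ← Finset.mul_sum]
    ring
  rw [Finset.sum_congr rfl key, Finset.sum_add_distrib, Finset.sum_sub_distrib,
    ← Finset.mul_sum, ← Finset.sum_mul, Finset.sum_const, Finset.card_range, nsmul_eq_mul,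
    ← Finset.mul_sum]
  ring

lemma P_ident (n m : ℕ) (hnm : n = m + 1) (hm1 : 1 ≤ m) (r : ℝ) (hr0 : r ≠ 0)
    (f : ℕ → ℕ → ℝ) :
    (((n:ℝ)+r)/n) * (∑ i ∈ range n, ∑ j ∈ range n, (f i j)^2)
      + (((n:ℝ)+r)*((n:ℝ)^2-(n:ℝ)-r)/(r*n)) * (∑ i ∈ range m, ∑ j ∈ range m, (f i j)^2)
      - (∑ i ∈ range n, f i i)^2
    = (((n:ℝ)+r)/n) * (∑ i ∈ range n, ∑ j ∈ (range n).erase i, (f i j)^2)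
      + (((n:ℝ)+r)*((n:ℝ)^2-(n:ℝ)-r)/(r*n)) * (∑ i ∈ range m, ∑ j ∈ (range m).erase i, (f i j)^2)
      + ((((n:ℝ)+r)*((n:ℝ)-1)/r)/(2*m)) * (∑ i ∈ range m, ∑ j ∈ range m, (f i i - f j j)^2)
      + ((n:ℝ)/r) * ((∑ i ∈ range m, f i i) - (r/n)*(f m m))^2 := by
  subst hnm
  have hV := var_ident m (fun i => f i i)
  rw [sum_sq_split f (m+1), sum_sq_split f m, hV, Finset.sum_range_succ (fun i => f i i),
    Finset.sum_range_succ (fun i => (f i i)^2)]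
  have hm0 : (m:ℝ) ≠ 0 := Nat.cast_ne_zero.mpr (by omega)
  have hm10 : ((m:ℕ):ℝ) + 1 ≠ 0 := by positivity
  push_cast
  field_simp
  ring

lemma single (m : ℕ) (hm1 : 1 ≤ m) (r : ℝ) (hr0 : 0 < r)
    (hrn : r < ((m:ℝ)+1)*(((m:ℝ)+1)-1)) (f : ℕ → ℕ → ℝ) :
    0 ≤ ((((m:ℝ)+1)+r)/((m:ℝ)+1)) * (∑ i ∈ range (m+1), ∑ j ∈ range (m+1), (f i j)^2)
      + ((((m:ℝ)+1)+r)*(((m:ℝ)+1)^2-((m:ℝ)+1)-r)/(r*((m:ℝ)+1))) *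
          (∑ i ∈ range m, ∑ j ∈ range m, (f i j)^2)
      - (∑ i ∈ range (m+1), f i i)^2
    ∧ ((((((m:ℝ)+1)+r)/((m:ℝ)+1)) * (∑ i ∈ range (m+1), ∑ j ∈ range (m+1), (f i j)^2)
      + ((((m:ℝ)+1)+r)*(((m:ℝ)+1)^2-((m:ℝ)+1)-r)/(r*((m:ℝ)+1))) *
          (∑ i ∈ range m, ∑ j ∈ range m, (f i j)^2)
      - (∑ i ∈ range (m+1), f i i)^2 = 0)
      ↔ (∀ i < m+1, ∀ j < m+1, i ≠ j → f i j = 0)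
        ∧ ∀ i < m, f m m = (((m:ℝ)+1)*(((m:ℝ)+1)-1)/r) * f i i) := by
  have hN : ((m+1:ℕ):ℝ) = (m:ℝ)+1 := by push_cast; ring
  have hid := P_ident (m+1) m rfl hm1 r hr0.ne' f
  rw [hN] at hid
  have hM1 : (1:ℝ) ≤ (m:ℝ) := by exact_mod_cast hm1
  have hc : 0 < (((m:ℝ)+1)+r)/((m:ℝ)+1) := by positivity
  have hd : 0 < (((m:ℝ)+1)+r)*(((m:ℝ)+1)^2-((m:ℝ)+1)-r)/(r*((m:ℝ)+1)) := by
    apply div_pos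
    · apply mul_pos (by linarith)
      nlinarith
    · positivity
  have he : 0 < ((((m:ℝ)+1)+r)*(((m:ℝ)+1)-1)/r)/(2*(m:ℝ)) := by
    apply div_pos
    · apply div_pos (by nlinarith) hr0
    · linarith
  have hg : 0 < ((m:ℝ)+1)/r := by positivity
  set A := ∑ i ∈ range (m+1), ∑ j ∈ (range (m+1)).erase i, (f i j)^2 with hA
  set B := ∑ i ∈ range m, ∑ j ∈ (range m).erase i, (f i j)^2 with hB
  set V := ∑ i ∈ range m, ∑ j ∈ range m, (f i i - f j j)^2 with hVdef
  set W := ((∑ i ∈ range m, f i i) - (r/((m:ℝ)+1))*(f m m))^2 with hW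
  have hA0 : 0 ≤ A := Finset.sum_nonneg fun i _ => Finset.sum_nonneg fun j _ => sq_nonneg _
  have hB0 : 0 ≤ B := Finset.sum_nonneg fun i _ => Finset.sum_nonneg fun j _ => sq_nonneg _
  have hV0 : 0 ≤ V := Finset.sum_nonneg fun i _ => Finset.sum_nonneg fun j _ => sq_nonneg _
  have hW0 : 0 ≤ W := sq_nonneg _
  constructor
  · rw [hid]
    have := mul_nonneg hc.le hA0
    have := mul_nonneg hd.le hB0
    have := mul_nonneg he.le hV0
    have := mul_nonneg hg.le hW0
    linarith
  · rw [hid]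
    constructor
    · intro h0
      have hT1 : 0 ≤ (((m:ℝ)+1)+r)/((m:ℝ)+1) * A := mul_nonneg hc.le hA0
      have hT2 : 0 ≤ (((m:ℝ)+1)+r)*(((m:ℝ)+1)^2-((m:ℝ)+1)-r)/(r*((m:ℝ)+1)) * B :=
        mul_nonneg hd.le hB0
      have hT3 : 0 ≤ ((((m:ℝ)+1)+r)*(((m:ℝ)+1)-1)/r)/(2*(m:ℝ)) * V := mul_nonneg he.le hV0
      have hT4 : 0 ≤ ((m:ℝ)+1)/r * W := mul_nonneg hg.le hW0
      have hAz : A = 0 := by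
        have : (((m:ℝ)+1)+r)/((m:ℝ)+1) * A = 0 := by linarith
        exact (mul_eq_zero.mp this).resolve_left hc.ne'
      have hVz : V = 0 := by
        have : ((((m:ℝ)+1)+r)*(((m:ℝ)+1)-1)/r)/(2*(m:ℝ)) * V = 0 := by linarith
        exact (mul_eq_zero.mp this).resolve_left he.ne'
      have hWz : W = 0 := by
        have : ((m:ℝ)+1)/r * W = 0 := by linarith
        exact (mul_eq_zero.mp this).resolve_left hg.ne'
      have hoff : ∀ i < m+1, ∀ j < m+1, i ≠ j → f i j = 0 := by
        intro i hi j hj hij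
        have h1 := (Finset.sum_eq_zero_iff_of_nonneg
          (fun i _ => Finset.sum_nonneg fun j _ => sq_nonneg (f i j))).mp hAz i
          (Finset.mem_range.mpr hi)
        have h2 := (Finset.sum_eq_zero_iff_of_nonneg (fun j _ => sq_nonneg (f i j))).mp h1 j
          (Finset.mem_erase.mpr ⟨hij.symm, Finset.mem_range.mpr hj⟩)
        exact (pow_eq_zero_iff two_ne_zero).mp h2
      refine ⟨hoff, ?_⟩
      have hdiag : ∀ i ∈ range m, ∀ j ∈ range m, f i i = f j j := by
        intro i hi j hj
        have h1 := (Finset.sum_eq_zero_iff_of_nonneg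
          (fun i _ => Finset.sum_nonneg fun j _ => sq_nonneg (f i i - f j j))).mp hVz i hi
        have h2 := (Finset.sum_eq_zero_iff_of_nonneg
          (fun j _ => sq_nonneg (f i i - f j j))).mp h1 j hj
        exact sub_eq_zero.mp ((pow_eq_zero_iff two_ne_zero).mp h2)
      have hsz : (∑ i ∈ range m, f i i) = (r/((m:ℝ)+1))*(f m m) :=
        sub_eq_zero.mp ((pow_eq_zero_iff two_ne_zero).mp hWz)
      intro i hi
      have hsum : (∑ j ∈ range m, f j j) = (m:ℝ) * f i i := by
        rw [Finset.sum_congr rfl (fun j hj => hdiag j hj i (Finset.mem_range.mpr hi)),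
          Finset.sum_const, Finset.card_range, nsmul_eq_mul]
      rw [hsum] at hsz
      have hm0 : (m:ℝ) ≠ 0 := by linarith
      have hm10 : (m:ℝ)+1 ≠ 0 := by linarith
      field_simp at hsz ⊢
      linarith [hsz]
    · rintro ⟨hoff, hdiag⟩
      have hK : (0:ℝ) < ((m:ℝ)+1)*(((m:ℝ)+1)-1)/r := by
        apply div_pos (by nlinarith) hr0
      have hAz : A = 0 := by
        apply Finset.sum_eq_zero; intro i hi
        apply Finset.sum_eq_zero; intro j hj
        rcases Finset.mem_erase.mp hj with ⟨hji, hjr⟩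
        rw [hoff i (Finset.mem_range.mp hi) j (Finset.mem_range.mp hjr) hji.symm]
        norm_num
      have hBz : B = 0 := by
        apply Finset.sum_eq_zero; intro i hi
        apply Finset.sum_eq_zero; intro j hj
        rcases Finset.mem_erase.mp hj with ⟨hji, hjr⟩
        rw [hoff i (by have := Finset.mem_range.mp hi; omega) j
          (by have := Finset.mem_range.mp hjr; omega) hji.symm]
        norm_num
      have hVz : V = 0 := by
        apply Finset.sum_eq_zero; intro i hi
        apply Finset.sum_eq_zero; intro j hj
        have h1 := hdiag i (Finset.mem_range.mp hi)
        have h2 := hdiag j (Finset.mem_range.mp hj)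
        have : f i i = f j j := mul_left_cancel₀ hK.ne' (h1 ▸ h2 ▸ rfl)
        rw [this]; ring
      have hWz : W = 0 := by
        rw [hW]
        have hm10 : (m:ℝ)+1 ≠ 0 := by linarith
        have hsum : (∑ i ∈ range m, f i i) = (m:ℝ) * (r / (((m:ℝ)+1)*(((m:ℝ)+1)-1)) * f m m) := by
          rw [Finset.sum_congr rfl (fun i hi => ?_), Finset.sum_const, Finset.card_range,
            nsmul_eq_mul]
          have h1 := hdiag i (Finset.mem_range.mp hi)
          have hm0' : (m:ℝ)+1-1 ≠ 0 := by linarith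
          field_simp at h1 ⊢
          linarith [h1]
        rw [hsum]
        have : (m:ℝ) * (r / (((m:ℝ)+1)*(((m:ℝ)+1)-1)) * f m m) - r / ((m:ℝ)+1) * f m m = 0 := by
          have hm0 : (m:ℝ) ≠ 0 := by linarith
          field_simp
          rw [add_sub_cancel_right, div_self hm0]; ring
        rw [this]
        norm_num
      rw [hAz, hBz, hVz, hWz]
      ring

/-- equality case of the generalized Casorati inequality, algebraic
content: with `0 < r < n(n−1)`, the sum over all normal directions `α` of the
quadratic polynomials 𝒫 vanishes (i.e. equality holds in the derived inequality,
the infimum of 𝒞(L) being attained) if and only if for every `α` all off-diagonal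
components vanish and `h_{nn}^α = (n(n−1)/r)·h_{ii}^α` for `i = 1,...,n−1`; this
is exactly the invariantly quasi-umbilical shape-operator form
`A = diag(a,...,a, n(n−1)a/r)` in each normal direction. -/
theorem stmt9 (n : ℕ) (hn : 2 ≤ n) (r : ℝ) (hr0 : 0 < r)
    (hrn : r < (n : ℝ)*((n : ℝ)-1)) (q : ℕ) (h : Fin q → ℕ → ℕ → ℝ)
    (hsymm : ∀ α i j, h α i j = h α j i) :
    (∑ α : Fin q,
        ((((n : ℝ)+r)/(n : ℝ)) * ∑ i ∈ Finset.range n, ∑ j ∈ Finset.range n, (h α i j)^2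
          + (((n : ℝ)+r)*((n : ℝ)^2 - (n : ℝ) - r)/(r*(n : ℝ))) *
              ∑ i ∈ Finset.range (n-1), ∑ j ∈ Finset.range (n-1), (h α i j)^2
          - (∑ i ∈ Finset.range n, h α i i)^2) = 0)
    ↔ ∀ α : Fin q, (∀ i < n, ∀ j < n, i ≠ j → h α i j = 0)
        ∧ ∀ i < n - 1, h α (n-1) (n-1) = ((n : ℝ)*((n : ℝ)-1)/r) * h α i i := by
  obtain ⟨m, rfl⟩ : ∃ m, n = m + 1 := ⟨n - 1, by omega⟩
  have hm1 : 1 ≤ m := by omega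
  simp only [Nat.add_sub_cancel]
  push_cast at hrn ⊢
  rw [Finset.sum_eq_zero_iff_of_nonneg fun α _ => (single m hm1 r hr0 hrn (h α)).1]
  simp only [Finset.mem_univ, forall_true_left]
  exact forall_congr' fun α => (single m hm1 r hr0 hrn (h α)).2
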